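/- Let φ₁ be a vector-valued modular form of weight λ₁ with respect to a representation ρ₁ of Γ on ℂ^{n₁}, and φ₂ a vector-valued modular form of weight λ₂ with respect to ρ₂ on ℂ^{n₂}, with λ₁, λ₂ ≥ 0. For a nonnegative integer w, the Rankin–Cohen bracket [φ₁, φ₂]_w^{(λ₁,λ₂)}(z) = Σ_{r=0}^{w} (−1)^r C(λ₁+w−1, w−r) C(λ₂+w−1, r) φ₁^{(r)}(z) ⊗ φ₂^{(w−r)}(z) is a vector-valued modular form of weight λ₁+λ₂+2w with respect to the tensor product representation ρ₁ ⊗ ρ₂. -/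

import Mathlib

open Matrix Complex Finset

abbrev SL2R := Matrix.SpecialLinearGroup (Fin 2) ℝ

noncomputable def Jf (γ : SL2R) (z : ℂ) : ℂ := (γ.1 1 0 : ℝ) * z + (γ.1 1 1 : ℝ)

noncomputable def actSL (γ : SL2R) (z : ℂ) : ℂ :=
  ((γ.1 0 0 : ℝ) * z + (γ.1 0 1 : ℝ)) / Jf γ z

/-- Generalized binomial coefficient C(a, r) = a(a−1)⋯(a−r+1)/r! for a ∈ ℤ. -/
noncomputable def gchoose (a : ℤ) (r : ℕ) : ℂ :=
  (∏ i ∈ Finset.range r, ((a : ℂ) - (i : ℂ))) / (r.factorial : ℂ)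

/-- Vector-valued modular form of weight k for Γ with respect to a real
representation ρ on ℝ^ι: holomorphy on ℋ and f(γz) = 𝔍(γ,z)^k • ρ(γ) f(z). -/
def IsVVMF {ι : Type} [Fintype ι] (Γ : Subgroup SL2R)
    (ρ : SL2R → Matrix ι ι ℝ) (k : ℤ) (f : ℂ → ι → ℂ) : Prop :=
  DifferentiableOn ℂ f {z : ℂ | 0 < z.im} ∧
    ∀ γ ∈ Γ, ∀ z : ℂ, 0 < z.im →
      f (actSL γ z) = Jf γ z ^ k • ((ρ γ).map Complex.ofReal *ᵥ f z)

namespace RC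
def H : Set ℂ := {z : ℂ | 0 < z.im}

lemma isOpen_H : IsOpen H := isOpen_lt continuous_const Complex.continuous_im
lemma detEq (γ : SL2R) : γ.1 0 0 * γ.1 1 1 - γ.1 0 1 * γ.1 1 0 = 1 := by
  have := γ.2; rwa [Matrix.det_fin_two] at this

lemma hasDerivAt_Jf (γ : SL2R) (z : ℂ) : HasDerivAt (Jf γ) ((γ.1 1 0 : ℝ) : ℂ) z := by
  have := ((hasDerivAt_id z).const_mul ((γ.1 1 0 : ℝ) : ℂ)).add_const ((γ.1 1 1 : ℝ) : ℂ)
  simp only [id, mul_one] at this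
  exact this

lemma hasDerivAt_actSL (γ : SL2R) {z : ℂ} (hz : Jf γ z ≠ 0) :
    HasDerivAt (actSL γ) (((Jf γ z) ^ 2)⁻¹) z := by
  have hnum : HasDerivAt (fun z : ℂ => ((γ.1 0 0 : ℝ) : ℂ) * z + ((γ.1 0 1 : ℝ) : ℂ))
      ((γ.1 0 0 : ℝ) : ℂ) z := by
    simpa using ((hasDerivAt_id z).const_mul ((γ.1 0 0 : ℝ) : ℂ)).add_const ((γ.1 0 1 : ℝ) : ℂ)
  have h := hnum.div (hasDerivAt_Jf γ z) hz
  have hd' : ((γ.1 0 0 : ℝ) : ℂ) * ((γ.1 1 1 : ℝ):ℂ) - ((γ.1 0 1 : ℝ):ℂ) * ((γ.1 1 0 : ℝ):ℂ) = 1 := by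
    exact_mod_cast congrArg (Complex.ofReal) (detEq γ)
  have hnum1 : ((γ.1 0 0:ℝ):ℂ) * Jf γ z - (((γ.1 0 0:ℝ):ℂ) * z + ((γ.1 0 1:ℝ):ℂ)) * ((γ.1 1 0:ℝ):ℂ) = 1 := by
    rw [Jf]; linear_combination hd'
  rw [hnum1, one_div] at h
  exact h

lemma differentiableOn_iteratedDeriv {E : Type} [NormedAddCommGroup E] [NormedSpace ℂ E]
    [CompleteSpace E] {f : ℂ → E} (hf : DifferentiableOn ℂ f H) (n : ℕ) :
    DifferentiableOn ℂ (iteratedDeriv n f) H := by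
  induction n with
  | zero => simpa using hf
  | succ n ih =>
    rw [iteratedDeriv_succ]
    exact ((ih.analyticOnNhd isOpen_H).deriv).differentiableOn


noncomputable def Rf (y m : ℕ) : ℂ := ∏ i ∈ range m, ((y : ℂ) + i)
noncomputable def Af (l r j : ℕ) : ℂ := (r.choose j : ℂ) * Rf (l + j) (r - j)

lemma fact_ne (n : ℕ) : (n.factorial : ℂ) ≠ 0 :=
  Nat.cast_ne_zero.2 (Nat.factorial_ne_zero n)

lemma F1 (x : ℤ) (j s : ℕ) :
    gchoose x (j + s) * ((j + s).choose j : ℂ) = gchoose x j * gchoose (x - j) s := by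
  unfold gchoose
  rw [Finset.prod_range_add]
  have h2 : ∏ i ∈ range s, ((x : ℂ) - (j + i : ℕ)) = ∏ i ∈ range s, (((x - j : ℤ) : ℂ) - i) := by
    refine Finset.prod_congr rfl fun i _ => ?_
    push_cast; ring
  rw [h2]
  have hfac : ((j + s).factorial : ℂ) = ((j + s).choose j : ℂ) * j.factorial * s.factorial := by
    have := Nat.choose_mul_factorial_mul_factorial (Nat.le_add_right j s)
    rw [Nat.add_sub_cancel_left] at this
    exact_mod_cast this.symm
  have hc : ((j + s).choose j : ℂ) ≠ 0 :=
    Nat.cast_ne_zero.2 (Nat.choose_pos (Nat.le_add_right j s)).ne'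
  rw [hfac, div_mul_eq_mul_div, div_mul_div_comm,
    div_eq_div_iff (by exact mul_ne_zero (mul_ne_zero hc (fact_ne j)) (fact_ne s))
      (by exact mul_ne_zero (fact_ne j) (fact_ne s))]
  ring

lemma F2 (y n s : ℕ) (hs : s ≤ n) :
    gchoose ((y : ℤ) + n - 1) s * (∏ i ∈ range (n - s), ((y : ℂ) + i)) =
      (∏ i ∈ range n, ((y : ℂ) + i)) / (s.factorial : ℂ) := by
  unfold gchoose
  have h1 : ∏ i ∈ range s, ((((y : ℤ) + n - 1 : ℤ) : ℂ) - i) =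
      ∏ i ∈ range s, ((y : ℂ) + ((n - s) + i : ℕ)) := by
    rw [← Finset.prod_range_reflect]
    refine Finset.prod_congr rfl fun i hi => ?_
    have hi' : i < s := mem_range.1 hi
    have hz2 : (y : ℤ) + n - 1 - ((s - 1 - i : ℕ) : ℤ) = ((y + (n - s + i) : ℕ) : ℤ) := by omega
    calc (((y : ℤ) + n - 1 : ℤ) : ℂ) - ((s - 1 - i : ℕ) : ℂ)
        = (((y : ℤ) + n - 1 - ((s - 1 - i : ℕ) : ℤ) : ℤ) : ℂ) := by push_cast; ring
      _ = ((y + (n - s + i) : ℕ) : ℂ) := by exact_mod_cast hz2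
      _ = (y : ℂ) + ((n - s + i : ℕ) : ℂ) := by push_cast; ring
  rw [h1, div_mul_eq_mul_div, mul_comm]
  congr 1
  have := Finset.prod_range_add (fun i : ℕ => ((y : ℂ) + i)) (n - s) s
  rw [show n - s + s = n by omega] at this
  rw [this]

lemma choose_inv_fact (n s : ℕ) (hs : s ≤ n) :
    (1 : ℂ) / (s.factorial * (n - s).factorial) = (n.choose s : ℂ) / n.factorial := by
  have h : ((n.choose s : ℕ) : ℂ) * s.factorial * (n - s).factorial = n.factorial := by
    exact_mod_cast Nat.choose_mul_factorial_mul_factorial hs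
  rw [div_eq_div_iff (by exact mul_ne_zero (fact_ne s) (fact_ne (n - s))) (fact_ne n), ← h]
  ring

lemma Rf_zero (y : ℕ) : Rf y 0 = 1 := by simp [Rf]

lemma Rf_succ_shift (l j m : ℕ) : Rf (l + j) (m + 1) = Rf (l + j + 1) m * ((l + j : ℕ) : ℂ) := by
  rw [Rf, Finset.prod_range_succ', Rf]
  simp only [Nat.cast_zero, add_zero]
  congr 1
  refine Finset.prod_congr rfl fun i _ => ?_
  push_cast; ring

lemma Af_diag (l r : ℕ) : Af l r r = 1 := by simp [Af, Rf]

lemma Af_zero_left (l r : ℕ) : Af l (r + 1) 0 = Af l r 0 * ((l : ℂ) + r) := by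
  simp only [Af, Nat.choose_zero_right, Nat.cast_one, one_mul, Nat.add_zero, Nat.sub_zero]
  rw [Rf, Finset.prod_range_succ, Rf]

lemma Af_rec_step (l r j : ℕ) (hj : j < r) :
    Af l (r + 1) (j + 1) = Af l r (j + 1) * ((l : ℂ) + r + (j + 1)) + Af l r j := by
  have hm : r - j = (r - j - 1) + 1 := by omega
  set m := r - j - 1 with hmdef
  have h1 : Rf (l + (j + 1)) (r + 1 - (j + 1)) = Rf (l + (j + 1)) m * ((l + r : ℕ) : ℂ) := by
    rw [show r + 1 - (j + 1) = m + 1 by omega, Rf, Finset.prod_range_succ, Rf]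
    congr 1
    push_cast
    have : (m : ℂ) = (r : ℂ) - 1 - j := by
      have : (m : ℤ) = r - 1 - j := by omega
      exact_mod_cast this
    rw [this]; ring
  have h2 : Rf (l + j) (r - j) = Rf (l + (j + 1)) m * ((l + j : ℕ) : ℂ) := by
    rw [hm, Rf_succ_shift l j m, show l + j + 1 = l + (j + 1) by ring]
  have h3 : Rf (l + (j + 1)) (r - (j + 1)) = Rf (l + (j + 1)) m := by rw [show r - (j+1) = m by omega]
  rw [Af, Af, Af, h1, h2, h3]
  have hp' : (((r + 1).choose (j + 1) : ℕ) : ℂ) = (r.choose j : ℂ) + (r.choose (j + 1) : ℂ) := by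
    rw [Nat.choose_succ_succ]; push_cast; ring
  have hq' : (r.choose (j + 1) : ℂ) * ((j : ℂ) + 1) = (r.choose j : ℂ) * ((r : ℂ) - j) := by
    have h := Nat.choose_succ_right_eq r j
    have : ((r.choose (j+1) * (j+1) : ℕ) : ℂ) = ((r.choose j * (r - j) : ℕ) : ℂ) := by
      exact_mod_cast congrArg (Nat.cast (R := ℂ)) h
    push_cast [Nat.cast_sub hj.le] at this
    exact this
  push_cast
  linear_combination Rf (l + (j + 1)) m * (((l : ℂ) + r) * hp' - hq')

lemma Af_rec (l r : ℕ) (X : ℕ → ℂ) :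
    ∑ j ∈ range (r + 2), Af l (r + 1) j * X j
      = ∑ j ∈ range (r + 1), (Af l r j * ((l : ℂ) + r + j)) * X j
        + ∑ j ∈ range (r + 1), Af l r j * X (j + 1) := by
  rw [Finset.sum_range_succ' (fun j => Af l (r + 1) j * X j) (r + 1),
    Finset.sum_range_succ' (fun j => (Af l r j * ((l : ℂ) + r + j)) * X j) r,
    Finset.sum_range_succ (fun j => Af l r j * X (j + 1)) r,
    Finset.sum_range_succ (fun j => Af l (r + 1) (j + 1) * X (j + 1)) r]
  have e0 : Af l (r + 1) 0 * X 0 = (Af l r 0 * ((l : ℂ) + r + 0)) * X 0 := by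
    rw [Af_zero_left]; push_cast; ring
  have etop : Af l (r + 1) (r + 1) * X (r + 1) = Af l r r * X (r + 1) := by
    rw [Af_diag, Af_diag]
  have emid : ∀ j ∈ range r, Af l (r + 1) (j + 1) * X (j + 1)
      = (Af l r (j + 1) * ((l : ℂ) + r + (j + 1))) * X (j + 1) + Af l r j * X (j + 1) := by
    intro j hj
    rw [Af_rec_step l r j (mem_range.1 hj)]; ring
  rw [Finset.sum_congr rfl emid, Finset.sum_add_distrib, e0, etop]
  push_cast
  ring

lemma alt_sum (n : ℕ) :
    ∑ s ∈ range (n + 1), (-1 : ℂ) ^ s * (n.choose s : ℂ) = if n = 0 then 1 else 0 := by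
  have h := Int.alternating_sum_range_choose (n := n)
  have := congrArg (fun z : ℤ => (z : ℂ)) h
  push_cast at this
  rw [this]


lemma hasDerivAt_iteratedDeriv {E : Type} [NormedAddCommGroup E] [NormedSpace ℂ E]
    [CompleteSpace E] {f : ℂ → E} (hf : DifferentiableOn ℂ f H) (n : ℕ) {z : ℂ} (hz : z ∈ H) :
    HasDerivAt (iteratedDeriv n f) (iteratedDeriv (n + 1) f z) z := by
  have h := ((differentiableOn_iteratedDeriv hf n).differentiableAt
    (isOpen_H.mem_nhds hz)).hasDerivAt
  rwa [iteratedDeriv_succ]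

lemma diffOn_component {ι : Type} [Fintype ι] {f : ℂ → ι → ℂ}
    (hf : DifferentiableOn ℂ f H) (p : ι) : DifferentiableOn ℂ (fun z => f z p) H := by
  intro z hz
  have := ((ContinuousLinearMap.proj p : (ι → ℂ) →L[ℂ] ℂ).differentiableAt).comp_differentiableWithinAt z (hf z hz)
  exact this

lemma iteratedDeriv_component {ι : Type} [Fintype ι] {f : ℂ → ι → ℂ}
    (hf : DifferentiableOn ℂ f H) (p : ι) (n : ℕ) :
    ∀ z ∈ H, iteratedDeriv n f z p = iteratedDeriv n (fun z => f z p) z := by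
  induction n with
  | zero => intro z _; rfl
  | succ n ih =>
    intro z hz
    have hdF : DifferentiableAt ℂ (iteratedDeriv n f) z :=
      (differentiableOn_iteratedDeriv hf n).differentiableAt (isOpen_H.mem_nhds hz)
    have h1 : HasDerivAt (fun x => iteratedDeriv n f x p) (deriv (iteratedDeriv n f) z p) z := by
      have := (ContinuousLinearMap.proj p : (ι → ℂ) →L[ℂ] ℂ).hasFDerivAt.comp_hasDerivAt z hdF.hasDerivAt
      exact this
    have h2 : deriv (fun x => iteratedDeriv n f x p) z
        = deriv (iteratedDeriv n (fun x => f x p)) z := by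
      apply Filter.EventuallyEq.deriv_eq
      filter_upwards [isOpen_H.mem_nhds hz] with x hx using ih x hx
    calc iteratedDeriv (n + 1) f z p = deriv (iteratedDeriv n f) z p := by rw [iteratedDeriv_succ]
      _ = deriv (fun x => iteratedDeriv n f x p) z := h1.deriv.symm
      _ = deriv (iteratedDeriv n (fun x => f x p)) z := h2
      _ = iteratedDeriv (n + 1) (fun x => f x p) z := by rw [iteratedDeriv_succ]

lemma iteratedDeriv_sum_const_mul {ι : Type} [Fintype ι] (g : ι → ℂ → ℂ) (c : ι → ℂ)
    (hg : ∀ q, DifferentiableOn ℂ (g q) H) (n : ℕ) :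
    ∀ z ∈ H, iteratedDeriv n (fun z => ∑ q, c q * g q z) z
      = ∑ q, c q * iteratedDeriv n (g q) z := by
  induction n with
  | zero => intro z _; simp
  | succ n ih =>
    intro z hz
    have h2 : deriv (iteratedDeriv n (fun z => ∑ q, c q * g q z)) z
        = deriv (fun x => ∑ q, c q * iteratedDeriv n (g q) x) z := by
      apply Filter.EventuallyEq.deriv_eq
      filter_upwards [isOpen_H.mem_nhds hz] with x hx using ih x hx
    have h3 : HasDerivAt (fun x => ∑ q, c q * iteratedDeriv n (g q) x)
        (∑ q, c q * iteratedDeriv (n + 1) (g q) z) z := by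
      apply HasDerivAt.fun_sum
      intro q _
      exact (hasDerivAt_iteratedDeriv (hg q) n hz).const_mul (c q)
    rw [iteratedDeriv_succ, h2, h3.deriv]

lemma detEq2 : True := trivial

lemma Jf_ne_zero (γ : SL2R) {z : ℂ} (hz : z ∈ H) : Jf γ z ≠ 0 := by
  intro h
  have him : (γ.1 1 0 : ℝ) * z.im = 0 := by
    have := congrArg Complex.im h
    simpa [Jf, Complex.add_im, Complex.mul_im] using this
  have hre : (γ.1 1 0 : ℝ) * z.re + γ.1 1 1 = 0 := by
    have := congrArg Complex.re h
    simpa [Jf, Complex.add_re, Complex.mul_re] using this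
  have hz' : z.im ≠ 0 := ne_of_gt hz
  have hc : γ.1 1 0 = 0 := by
    rcases mul_eq_zero.1 him with h | h
    · exact h
    · exact absurd h hz'
  have hd : γ.1 1 1 = 0 := by simpa [hc] using hre
  have := detEq γ
  rw [hc, hd] at this; simp at this

lemma im_actSL (γ : SL2R) (z : ℂ) :
    (actSL γ z).im = z.im / Complex.normSq (Jf γ z) := by
  have hd := detEq γ
  rw [actSL, Complex.div_im, div_sub_div_same]
  congr 1
  simp only [Jf, Complex.add_im, Complex.add_re, Complex.mul_im, Complex.mul_re,
    Complex.ofReal_re, Complex.ofReal_im]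
  ring_nf
  linear_combination z.im * hd

lemma actSL_mem (γ : SL2R) {z : ℂ} (hz : z ∈ H) : actSL γ z ∈ H := by
  have hJ : Jf γ z ≠ 0 := Jf_ne_zero γ hz
  have : 0 < Complex.normSq (Jf γ z) := Complex.normSq_pos.2 hJ
  show 0 < (actSL γ z).im
  rw [im_actSL]
  exact div_pos hz this

lemma mul_pow_pred (X : ℂ) (m : ℕ) :
    (m : ℂ) * X ^ (m - 1) * X ^ 2 = (m : ℂ) * X ^ m * X := by
  cases m with
  | zero => simp
  | succ k => rw [Nat.succ_sub_one, pow_succ]; ring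

lemma key_transform (γ : SL2R) (l : ℕ) (ψ g : ℂ → ℂ)
    (hψ : DifferentiableOn ℂ ψ H) (hg : DifferentiableOn ℂ g H)
    (hrel : ∀ z ∈ H, ψ (actSL γ z) = Jf γ z ^ l * g z) :
    ∀ r, ∀ z ∈ H, iteratedDeriv r ψ (actSL γ z) =
      ∑ j ∈ range (r + 1), Af l r j * ((γ.1 1 0 : ℝ) : ℂ) ^ (r - j)
        * Jf γ z ^ (l + r + j) * iteratedDeriv j g z := by
  intro r
  induction r with
  | zero =>
    intro z hz
    simpa [Af, Rf] using hrel z hz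
  | succ r ih =>
    intro z hz
    have hu : actSL γ z ∈ H := actSL_mem γ hz
    have hJ : Jf γ z ≠ 0 := Jf_ne_zero γ hz
    set cγ : ℂ := ((γ.1 1 0 : ℝ) : ℂ) with hcγ
    have hchain : HasDerivAt (fun x => iteratedDeriv r ψ (actSL γ x))
        (iteratedDeriv (r + 1) ψ (actSL γ z) * ((Jf γ z ^ 2)⁻¹)) z :=
      (hasDerivAt_iteratedDeriv hψ r hu).comp z (hasDerivAt_actSL γ hJ)
    have hterm : ∀ j ∈ range (r + 1),
        HasDerivAt (fun x => Af l r j * cγ ^ (r - j) * Jf γ x ^ (l + r + j) * iteratedDeriv j g x)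
          ((Af l r j * cγ ^ (r - j) * (((l + r + j : ℕ) : ℂ) * Jf γ z ^ (l + r + j - 1) * cγ))
              * iteratedDeriv j g z
            + (Af l r j * cγ ^ (r - j) * Jf γ z ^ (l + r + j)) * iteratedDeriv (j + 1) g z) z := by
      intro j _
      exact (((hasDerivAt_Jf γ z).pow (l + r + j)).const_mul (Af l r j * cγ ^ (r - j))).mul
        (hasDerivAt_iteratedDeriv hg j hz)
    have hS := HasDerivAt.fun_sum hterm
    have heq : iteratedDeriv (r + 1) ψ (actSL γ z) * (Jf γ z ^ 2)⁻¹
        = ∑ j ∈ range (r + 1),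
          ((Af l r j * cγ ^ (r - j) * (((l + r + j : ℕ) : ℂ) * Jf γ z ^ (l + r + j - 1) * cγ))
              * iteratedDeriv j g z
            + (Af l r j * cγ ^ (r - j) * Jf γ z ^ (l + r + j)) * iteratedDeriv (j + 1) g z) := by
      rw [← hchain.deriv, ← hS.deriv]
      apply Filter.EventuallyEq.deriv_eq
      filter_upwards [isOpen_H.mem_nhds hz] with x hx using ih x hx
    rw [← div_eq_mul_inv, div_eq_iff (pow_ne_zero 2 hJ)] at heq
    rw [heq, Finset.sum_mul]
    have hX : ∑ j ∈ range (r + 1 + 1),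
        Af l (r + 1) j * cγ ^ (r + 1 - j) * Jf γ z ^ (l + (r + 1) + j) * iteratedDeriv j g z
        = ∑ j ∈ range (r + 2),
          Af l (r + 1) j * (cγ ^ (r + 1 - j) * Jf γ z ^ (l + (r + 1) + j) * iteratedDeriv j g z) :=
      Finset.sum_congr rfl fun j _ => by ring
    rw [hX, Af_rec l r (fun j => cγ ^ (r + 1 - j) * Jf γ z ^ (l + (r + 1) + j) * iteratedDeriv j g z),
      ← Finset.sum_add_distrib]
    refine Finset.sum_congr rfl fun j hj => ?_
    have hjr : j ≤ r := Nat.lt_succ_iff.1 (mem_range.1 hj)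
    have e1 : cγ ^ (r + 1 - j) = cγ ^ (r - j) * cγ := by
      rw [show r + 1 - j = (r - j) + 1 by omega, pow_succ]
    have hA := mul_pow_pred (Jf γ z) (l + r + j)
    rw [e1, show l + (r + 1) + j = (l + r + j) + 1 by omega,
      show l + (r + 1) + (j + 1) = (l + r + j) + 1 + 1 by omega, pow_succ, pow_succ]
    push_cast at hA ⊢
    linear_combination (Af l r j * cγ ^ (r - j) * cγ * iteratedDeriv j g z) * hA

lemma term_eval (l₁ l₂ w j k s : ℕ) (c J u v : ℂ) (hjk : j + k ≤ w) (hs : s ≤ w - j - k) :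
    (-1 : ℂ) ^ (j + s) * gchoose ((l₁ : ℤ) + w - 1) (w - (j + s)) * gchoose ((l₂ : ℤ) + w - 1) (j + s)
        * (Af l₁ (j + s) j * c ^ (j + s - j) * J ^ (l₁ + (j + s) + j) * u)
        * (Af l₂ (w - (j + s)) k * c ^ (w - (j + s) - k) * J ^ (l₂ + (w - (j + s)) + k) * v)
    = ((-1 : ℂ) ^ j * gchoose ((l₂ : ℤ) + w - 1) j * gchoose ((l₁ : ℤ) + w - 1) k
        * Rf (l₁ + j) (w - j - k) * Rf (l₂ + k) (w - j - k) / (((w - j - k).factorial : ℕ) : ℂ)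
        * c ^ (w - j - k) * J ^ (l₁ + l₂ + w + j + k) * u * v)
      * ((-1 : ℂ) ^ s * (((w - j - k).choose s : ℕ) : ℂ)) := by
  set n := w - j - k with hn
  rw [show w - (j + s) = k + (n - s) by omega]
  simp only [Af]
  rw [show j + s - j = s by omega, show k + (n - s) - k = n - s by omega]
  have E1 := F1 ((l₂ : ℤ) + w - 1) j s
  rw [show (l₂ : ℤ) + w - 1 - j = ((l₂ + k : ℕ) : ℤ) + (n : ℕ) - 1 by push_cast; omega] at E1
  have E2 := F1 ((l₁ : ℤ) + w - 1) k (n - s)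
  rw [show (l₁ : ℤ) + w - 1 - k = ((l₁ + j : ℕ) : ℤ) + (n : ℕ) - 1 by push_cast; omega] at E2
  have E3 : gchoose (((l₂ + k : ℕ) : ℤ) + (n : ℕ) - 1) s * Rf (l₂ + k) (n - s) = Rf (l₂ + k) n / (s.factorial : ℂ) := by
    simpa [Rf] using F2 (l₂ + k) n s hs
  have E4 : gchoose (((l₁ + j : ℕ) : ℤ) + (n : ℕ) - 1) (n - s) * Rf (l₁ + j) s = Rf (l₁ + j) n / ((n - s).factorial : ℂ) := by
    have h := F2 (l₁ + j) n (n - s) (by omega)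
    rw [show n - (n - s) = s by omega] at h
    simpa [Rf] using h
  have E5 : (1 : ℂ) / ((s.factorial : ℂ) * ((n - s).factorial : ℂ)) = ((n.choose s : ℕ) : ℂ) / (n.factorial : ℂ) := choose_inv_fact n s hs
  have E6 : (-1 : ℂ) ^ (j + s) = (-1 : ℂ) ^ j * (-1 : ℂ) ^ s := pow_add _ _ _
  have E7 : c ^ s * c ^ (n - s) = c ^ n := by rw [← pow_add]; congr 1; omega
  have E8 : J ^ (l₁ + (j + s) + j) * J ^ (l₂ + (k + (n - s)) + k) = J ^ (l₁ + l₂ + w + j + k) := by rw [← pow_add]; congr 1; omega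
  calc (-1 : ℂ) ^ (j + s) * gchoose ((l₁ : ℤ) + w - 1) (k + (n - s)) * gchoose ((l₂ : ℤ) + w - 1) (j + s) * ((((j + s).choose j : ℕ) : ℂ) * Rf (l₁ + j) s * c ^ s * J ^ (l₁ + (j + s) + j) * u) * ((((k + (n - s)).choose k : ℕ) : ℂ) * Rf (l₂ + k) (n - s) * c ^ (n - s) * J ^ (l₂ + (k + (n - s)) + k) * v)
      = (-1 : ℂ) ^ (j + s) * gchoose ((l₁ : ℤ) + w - 1) (k + (n - s)) * (gchoose ((l₂ : ℤ) + w - 1) j * gchoose (((l₂ + k : ℕ) : ℤ) + (n : ℕ) - 1) s) * (Rf (l₁ + j) s * c ^ s * J ^ (l₁ + (j + s) + j) * u) * ((((k + (n - s)).choose k : ℕ) : ℂ) * Rf (l₂ + k) (n - s) * c ^ (n - s) * J ^ (l₂ + (k + (n - s)) + k) * v) := by linear_combination ((-1 : ℂ) ^ (j + s) * gchoose ((l₁ : ℤ) + w - 1) (k + (n - s)) * Rf (l₁ + j) s * c ^ s * J ^ (l₁ + (j + s) + j) * u * (((k + (n - s)).choose k : ℕ) : ℂ) * Rf (l₂ +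 k) (n - s) * c ^ (n - s) * J ^ (l₂ + (k + (n - s)) + k) * v) * E1
    _ = (-1 : ℂ) ^ (j + s) * (gchoose ((l₁ : ℤ) + w - 1) k * gchoose (((l₁ + j : ℕ) : ℤ) + (n : ℕ) - 1) (n - s)) * (gchoose ((l₂ : ℤ) + w - 1) j * gchoose (((l₂ + k : ℕ) : ℤ) + (n : ℕ) - 1) s) * (Rf (l₁ + j) s * c ^ s * J ^ (l₁ + (j + s) + j) * u) * (Rf (l₂ + k) (n - s) * c ^ (n - s) * J ^ (l₂ + (k + (n - s)) + k) * v) := by linear_combination ((-1 : ℂ) ^ (j + s) * gchoose ((l₂ : ℤ) + w - 1) j * gchoose (((l₂ + k : ℕ) : ℤ) + (n : ℕ) - 1) s * Rf (l₁ + j) s * c ^ s * J ^ (l₁ + (j + s) + j) * u * Rf (l₂ + k) (n - s) * c ^ (n - s) * J ^ (l₂ + (k + (n - s)) + k) * v) * E2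
    _ = (-1 : ℂ) ^ (j + s) * (gchoose ((l₁ : ℤ) + w - 1) k * gchoose (((l₁ + j : ℕ) : ℤ) + (n : ℕ) - 1) (n - s)) * gchoose ((l₂ : ℤ) + w - 1) j * (Rf (l₁ + j) s * c ^ s * J ^ (l₁ + (j + s) + j) * u) * (Rf (l₂ + k) n / (s.factorial : ℂ) * (c ^ (n - s) * J ^ (l₂ + (k + (n - s)) + k) * v)) := by linear_combination ((-1 : ℂ) ^ (j + s) * gchoose ((l₁ : ℤ) + w - 1) k * gchoose (((l₁ + j : ℕ) : ℤ) + (n : ℕ) - 1) (n - s) * gchoose ((l₂ : ℤ) + w - 1) j * Rf (l₁ + j) s * c ^ s * J ^ (l₁ + (j + s) + j) * u * c ^ (n - s) * J ^ (l₂ + (k + (n - s)) + k) * v) * E3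
    _ = (-1 : ℂ) ^ (j + s) * gchoose ((l₁ : ℤ) + w - 1) k * gchoose ((l₂ : ℤ) + w - 1) j * (Rf (l₁ + j) n / ((n - s).factorial : ℂ) * (c ^ s * J ^ (l₁ + (j + s) + j) * u)) * (Rf (l₂ + k) n / (s.factorial : ℂ) * (c ^ (n - s) * J ^ (l₂ + (k + (n - s)) + k) * v)) := by linear_combination ((-1 : ℂ) ^ (j + s) * gchoose ((l₁ : ℤ) + w - 1) k * gchoose ((l₂ : ℤ) + w - 1) j * c ^ s * J ^ (l₁ + (j + s) + j) * u * (Rf (l₂ + k) n / (s.factorial : ℂ)) * c ^ (n - s) * J ^ (l₂ + (k + (n - s)) + k) * v) * E4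
    _ = (-1 : ℂ) ^ (j + s) * gchoose ((l₁ : ℤ) + w - 1) k * gchoose ((l₂ : ℤ) + w - 1) j * Rf (l₁ + j) n * Rf (l₂ + k) n * (((n.choose s : ℕ) : ℂ) / (n.factorial : ℂ)) * (c ^ s * c ^ (n - s)) * (J ^ (l₁ + (j + s) + j) * J ^ (l₂ + (k + (n - s)) + k)) * u * v := by linear_combination ((-1 : ℂ) ^ (j + s) * gchoose ((l₁ : ℤ) + w - 1) k * gchoose ((l₂ : ℤ) + w - 1) j * Rf (l₁ + j) n * Rf (l₂ + k) n * (c ^ s * c ^ (n - s)) * (J ^ (l₁ + (j + s) + j) * J ^ (l₂ + (k + (n - s)) + k)) * u * v) * E5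
    _ = (-1 : ℂ) ^ j * (-1 : ℂ) ^ s * gchoose ((l₁ : ℤ) + w - 1) k * gchoose ((l₂ : ℤ) + w - 1) j * Rf (l₁ + j) n * Rf (l₂ + k) n * (((n.choose s : ℕ) : ℂ) / (n.factorial : ℂ)) * c ^ n * J ^ (l₁ + l₂ + w + j + k) * u * v := by linear_combination ((gchoose ((l₁ : ℤ) + w - 1) k * gchoose ((l₂ : ℤ) + w - 1) j * Rf (l₁ + j) n * Rf (l₂ + k) n * (((n.choose s : ℕ) : ℂ) / (n.factorial : ℂ)) * u * v) * (c ^ s * c ^ (n - s)) * (J ^ (l₁ + (j + s) + j) * J ^ (l₂ + (k + (n - s)) + k))) * E6 + ((gchoose ((l₁ : ℤ) + w - 1) k * gchoose ((l₂ : ℤ) + w - 1) j * Rf (l₁ + j) n * Rf (l₂ + k) n * (((n.choose s : ℕ) : ℂ) / (n.factorial : ℂ)) * u * v) * (-1 : ℂ) ^ j * (-1 : ℂ) ^ s * (J ^ (l₁ + (j + s) + j) * J ^ (l₂ + (k + (n - s)) + k))) * E7 + ((gchoose ((l₁ : ℤ) + w - 1) k * gchoose ((l₂ : ℤ) + w -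 1) j * Rf (l₁ + j) n * Rf (l₂ + k) n * (((n.choose s : ℕ) : ℂ) / (n.factorial : ℂ)) * u * v) * (-1 : ℂ) ^ j * (-1 : ℂ) ^ s * c ^ n) * E8
    _ = ((-1 : ℂ) ^ j * gchoose ((l₂ : ℤ) + w - 1) j * gchoose ((l₁ : ℤ) + w - 1) k * Rf (l₁ + j) n * Rf (l₂ + k) n / (n.factorial : ℂ) * c ^ n * J ^ (l₁ + l₂ + w + j + k) * u * v) * ((-1 : ℂ) ^ s * ((n.choose s : ℕ) : ℂ)) := by ring

lemma inner_sum (l₁ l₂ w j k : ℕ) (c J u v : ℂ) :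
    ∑ r ∈ range (w + 1),
      (-1 : ℂ) ^ r * gchoose ((l₁ : ℤ) + w - 1) (w - r) * gchoose ((l₂ : ℤ) + w - 1) r
        * (Af l₁ r j * c ^ (r - j) * J ^ (l₁ + r + j) * u)
        * (Af l₂ (w - r) k * c ^ (w - r - k) * J ^ (l₂ + (w - r) + k) * v)
    = if j + k = w then
        (-1 : ℂ) ^ j * gchoose ((l₂ : ℤ) + w - 1) j * gchoose ((l₁ : ℤ) + w - 1) k
          * J ^ (l₁ + l₂ + 2 * w) * u * v
      else 0 := by
  by_cases hjk : j + k ≤ w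
  · have hsub : Finset.Ico j (w - k + 1) ⊆ range (w + 1) := by
      intro r hr; rw [mem_range]; rw [mem_Ico] at hr; omega
    have hvan : ∀ r ∈ range (w + 1), r ∉ Finset.Ico j (w - k + 1) →
        (-1 : ℂ) ^ r * gchoose ((l₁ : ℤ) + w - 1) (w - r) * gchoose ((l₂ : ℤ) + w - 1) r
          * (Af l₁ r j * c ^ (r - j) * J ^ (l₁ + r + j) * u)
          * (Af l₂ (w - r) k * c ^ (w - r - k) * J ^ (l₂ + (w - r) + k) * v) = 0 := by
      intro r hr hr'
      rw [mem_range] at hr; rw [mem_Ico] at hr'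
      by_cases h1 : j ≤ r
      · have hk : (w - r).choose k = 0 := Nat.choose_eq_zero_of_lt (by omega)
        simp [Af, hk]
      · have hj : r.choose j = 0 := Nat.choose_eq_zero_of_lt (by omega)
        simp [Af, hj]
    rw [← Finset.sum_subset hsub hvan, Finset.sum_Ico_eq_sum_range,
      show w - k + 1 - j = (w - j - k) + 1 by omega]
    rw [Finset.sum_congr rfl fun s hs =>
      term_eval l₁ l₂ w j k s c J u v hjk (Nat.lt_succ_iff.1 (mem_range.1 hs))]
    rw [← Finset.mul_sum, alt_sum]
    by_cases hn : w - j - k = 0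
    · rw [if_pos hn, if_pos (by omega), mul_one, hn]
      simp only [Rf_zero, Nat.factorial_zero, pow_zero, Nat.cast_one, div_one, mul_one, one_mul]
      rw [show l₁ + l₂ + w + j + k = l₁ + l₂ + 2 * w by omega]
    · rw [if_neg hn, if_neg (by omega), mul_zero]
  · rw [if_neg (by omega)]
    apply Finset.sum_eq_zero
    intro r hr
    rw [mem_range] at hr
    by_cases h1 : j ≤ r
    · have hk : (w - r).choose k = 0 := Nat.choose_eq_zero_of_lt (by omega)
      simp [Af, hk]
    · have hj : r.choose j = 0 := Nat.choose_eq_zero_of_lt (by omega)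
      simp [Af, hj]

lemma sum_factor {n₁ n₂ : ℕ} (w : ℕ) (m₁ : Fin n₁ → ℂ) (m₂ : Fin n₂ → ℂ)
    (d₁ : ℕ → Fin n₁ → ℂ) (d₂ : ℕ → Fin n₂ → ℂ) (co : ℕ → ℂ) :
    ∑ q : Fin n₁ × Fin n₂, (m₁ q.1 * m₂ q.2)
        * (∑ r ∈ range (w + 1), co r * (d₁ r q.1 * d₂ (w - r) q.2))
    = ∑ r ∈ range (w + 1), co r
        * ((∑ q₁, m₁ q₁ * d₁ r q₁) * (∑ q₂, m₂ q₂ * d₂ (w - r) q₂)) := by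
  rw [Fintype.sum_prod_type]
  calc ∑ q₁, ∑ q₂, (m₁ q₁ * m₂ q₂) * (∑ r ∈ range (w + 1), co r * (d₁ r q₁ * d₂ (w - r) q₂))
      = ∑ q₁, ∑ q₂, ∑ r ∈ range (w + 1), co r * ((m₁ q₁ * d₁ r q₁) * (m₂ q₂ * d₂ (w - r) q₂)) := by
        refine Finset.sum_congr rfl fun q₁ _ => Finset.sum_congr rfl fun q₂ _ => ?_
        rw [Finset.mul_sum]
        exact Finset.sum_congr rfl fun r _ => by ring
    _ = ∑ q₁, ∑ r ∈ range (w + 1), ∑ q₂, co r * ((m₁ q₁ * d₁ r q₁) * (m₂ q₂ * d₂ (w - r) q₂)) :=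
        Finset.sum_congr rfl fun q₁ _ => Finset.sum_comm
    _ = ∑ r ∈ range (w + 1), ∑ q₁, ∑ q₂, co r * ((m₁ q₁ * d₁ r q₁) * (m₂ q₂ * d₂ (w - r) q₂)) :=
        Finset.sum_comm
    _ = ∑ r ∈ range (w + 1), co r
        * ((∑ q₁, m₁ q₁ * d₁ r q₁) * (∑ q₂, m₂ q₂ * d₂ (w - r) q₂)) := by
        refine Finset.sum_congr rfl fun r _ => ?_
        rw [Finset.sum_mul_sum, Finset.mul_sum]
        refine Finset.sum_congr rfl fun q₁ _ => ?_
        rw [Finset.mul_sum]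

end RC

open RC

/-- The Rankin–Cohen bracket of two vector-valued modular forms
φ₁ ∈ M̂_{l₁}(Γ, ρ₁) and φ₂ ∈ M̂_{l₂}(Γ, ρ₂),
[φ₁,φ₂]_w = Σ_{r=0}^w (−1)^r C(l₁+w−1, w−r) C(l₂+w−1, r) φ₁⁽ʳ⁾ ⊗ φ₂⁽ʷ⁻ʳ⁾,
is a vector-valued modular form of weight l₁+l₂+2w with respect to ρ₁ ⊗ ρ₂. -/
theorem rankin_cohen_vector_valued (n₁ n₂ : ℕ) (Γ : Subgroup SL2R)
    (ρ₁ : SL2R → Matrix (Fin n₁) (Fin n₁) ℝ)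
    (ρ₂ : SL2R → Matrix (Fin n₂) (Fin n₂) ℝ)
    (l₁ l₂ w : ℕ) (φ₁ : ℂ → Fin n₁ → ℂ) (φ₂ : ℂ → Fin n₂ → ℂ)
    (hφ₁ : IsVVMF Γ ρ₁ (l₁ : ℤ) φ₁) (hφ₂ : IsVVMF Γ ρ₂ (l₂ : ℤ) φ₂) :
    IsVVMF Γ (fun γ => Matrix.kroneckerMap (· * ·) (ρ₁ γ) (ρ₂ γ))
      ((l₁ : ℤ) + l₂ + 2 * w)
      (fun z p => ∑ r ∈ Finset.range (w + 1),
        (-1 : ℂ) ^ r * gchoose ((l₁ : ℤ) + w - 1) (w - r) *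
          gchoose ((l₂ : ℤ) + w - 1) r *
          (iteratedDeriv r φ₁ z p.1 * iteratedDeriv (w - r) φ₂ z p.2)) := by
  obtain ⟨hD₁, hT₁⟩ := hφ₁
  obtain ⟨hD₂, hT₂⟩ := hφ₂
  have hD₁' : DifferentiableOn ℂ φ₁ H := hD₁
  have hD₂' : DifferentiableOn ℂ φ₂ H := hD₂
  constructor
  · -- differentiability
    have : ∀ p : Fin n₁ × Fin n₂, DifferentiableOn ℂ
        (fun z => ∑ r ∈ Finset.range (w + 1),
          (-1 : ℂ) ^ r * gchoose ((l₁ : ℤ) + w - 1) (w - r) * gchoose ((l₂ : ℤ) + w - 1) r *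
            (iteratedDeriv r φ₁ z p.1 * iteratedDeriv (w - r) φ₂ z p.2)) H := by
      intro p
      apply DifferentiableOn.fun_sum
      intro r _
      exact ((diffOn_component (differentiableOn_iteratedDeriv hD₁' r) p.1).mul
        (diffOn_component (differentiableOn_iteratedDeriv hD₂' (w - r)) p.2)).const_mul _
    exact differentiableOn_pi.2 this
  · intro γ hγ z hz
    have hzH : z ∈ H := hz
    have huH : actSL γ z ∈ H := actSL_mem γ hzH
    funext p
    obtain ⟨p₁, p₂⟩ := p
    have hrel₁ : ∀ x ∈ H, (fun y => φ₁ y p₁) (actSL γ x)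
        = Jf γ x ^ l₁ * (fun y => ∑ q, ((ρ₁ γ p₁ q : ℝ) : ℂ) * φ₁ y q) x := by
      intro x hx
      have h := congrFun (hT₁ γ hγ x hx) p₁
      rw [Pi.smul_apply, smul_eq_mul] at h
      simp only []
      rw [h, zpow_natCast]
      congr 1
    have hrel₂ : ∀ x ∈ H, (fun y => φ₂ y p₂) (actSL γ x)
        = Jf γ x ^ l₂ * (fun y => ∑ q, ((ρ₂ γ p₂ q : ℝ) : ℂ) * φ₂ y q) x := by
      intro x hx
      have h := congrFun (hT₂ γ hγ x hx) p₂
      rw [Pi.smul_apply, smul_eq_mul] at h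
      simp only []
      rw [h, zpow_natCast]
      congr 1
    have hg₁diff : DifferentiableOn ℂ (fun y => ∑ q, ((ρ₁ γ p₁ q : ℝ) : ℂ) * φ₁ y q) H :=
      DifferentiableOn.fun_sum fun q _ => (diffOn_component hD₁' q).const_mul _
    have hg₂diff : DifferentiableOn ℂ (fun y => ∑ q, ((ρ₂ γ p₂ q : ℝ) : ℂ) * φ₂ y q) H :=
      DifferentiableOn.fun_sum fun q _ => (diffOn_component hD₂' q).const_mul _
    have hG₁ : ∀ jj : ℕ, iteratedDeriv jj (fun y => ∑ q, ((ρ₁ γ p₁ q : ℝ) : ℂ) * φ₁ y q) z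
        = ∑ q, ((ρ₁ γ p₁ q : ℝ) : ℂ) * iteratedDeriv jj φ₁ z q := by
      intro jj
      rw [iteratedDeriv_sum_const_mul (fun q x => φ₁ x q) _ (fun q => diffOn_component hD₁' q) jj z hzH]
      exact Finset.sum_congr rfl fun q _ => by
        rw [iteratedDeriv_component hD₁' q jj z hzH]
    have hG₂ : ∀ jj : ℕ, iteratedDeriv jj (fun y => ∑ q, ((ρ₂ γ p₂ q : ℝ) : ℂ) * φ₂ y q) z
        = ∑ q, ((ρ₂ γ p₂ q : ℝ) : ℂ) * iteratedDeriv jj φ₂ z q := by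
      intro jj
      rw [iteratedDeriv_sum_const_mul (fun q x => φ₂ x q) _ (fun q => diffOn_component hD₂' q) jj z hzH]
      exact Finset.sum_congr rfl fun q _ => by
        rw [iteratedDeriv_component hD₂' q jj z hzH]
    -- transformed iterated derivatives, with range extended to w+1
    have htr₁ : ∀ r ∈ Finset.range (w + 1), iteratedDeriv r φ₁ (actSL γ z) p₁
        = ∑ j ∈ Finset.range (w + 1), Af l₁ r j * ((γ.1 1 0 : ℝ) : ℂ) ^ (r - j)
            * Jf γ z ^ (l₁ + r + j) * (∑ q, ((ρ₁ γ p₁ q : ℝ) : ℂ) * iteratedDeriv j φ₁ z q) := by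
      intro r hr
      have hrw : r ≤ w := Nat.lt_succ_iff.1 (Finset.mem_range.1 hr)
      rw [iteratedDeriv_component hD₁' p₁ r _ huH,
        key_transform γ l₁ _ _ (diffOn_component hD₁' p₁) hg₁diff hrel₁ r z hzH]
      rw [Finset.sum_congr rfl fun j (_ : j ∈ Finset.range (r+1)) => by rw [hG₁ j]]
      apply Finset.sum_subset (by intro x hx; rw [Finset.mem_range] at *; omega)
      intro j hjw hjr
      rw [Finset.mem_range] at hjw hjr
      have : r.choose j = 0 := Nat.choose_eq_zero_of_lt (by omega)
      simp [Af, this]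
    have htr₂ : ∀ r ∈ Finset.range (w + 1), iteratedDeriv (w - r) φ₂ (actSL γ z) p₂
        = ∑ k ∈ Finset.range (w + 1), Af l₂ (w - r) k * ((γ.1 1 0 : ℝ) : ℂ) ^ (w - r - k)
            * Jf γ z ^ (l₂ + (w - r) + k) * (∑ q, ((ρ₂ γ p₂ q : ℝ) : ℂ) * iteratedDeriv k φ₂ z q) := by
      intro r hr
      have hrw : r ≤ w := Nat.lt_succ_iff.1 (Finset.mem_range.1 hr)
      rw [iteratedDeriv_component hD₂' p₂ (w - r) _ huH,
        key_transform γ l₂ _ _ (diffOn_component hD₂' p₂) hg₂diff hrel₂ (w - r) z hzH]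
      rw [Finset.sum_congr rfl fun k (_ : k ∈ Finset.range (w - r + 1)) => by rw [hG₂ k]]
      apply Finset.sum_subset (by intro x hx; rw [Finset.mem_range] at *; omega)
      intro k hkw hkr
      rw [Finset.mem_range] at hkw hkr
      have : (w - r).choose k = 0 := Nat.choose_eq_zero_of_lt (by omega)
      simp [Af, this]
    have hstep : ∑ r ∈ Finset.range (w + 1), (-1 : ℂ) ^ r * gchoose ((l₁ : ℤ) + w - 1) (w - r) * gchoose ((l₂ : ℤ) + w - 1) r
          * (iteratedDeriv r φ₁ (actSL γ z) p₁ * iteratedDeriv (w - r) φ₂ (actSL γ z) p₂)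
        = Jf γ z ^ (l₁ + l₂ + 2 * w) * ∑ r ∈ Finset.range (w + 1), (-1 : ℂ) ^ r * gchoose ((l₁ : ℤ) + w - 1) (w - r) * gchoose ((l₂ : ℤ) + w - 1) r
          * ((∑ q, ((ρ₁ γ p₁ q : ℝ) : ℂ) * iteratedDeriv r φ₁ z q) * (∑ q, ((ρ₂ γ p₂ q : ℝ) : ℂ) * iteratedDeriv (w - r) φ₂ z q)) := by
      calc ∑ r ∈ Finset.range (w + 1), (-1 : ℂ) ^ r * gchoose ((l₁ : ℤ) + w - 1) (w - r) * gchoose ((l₂ : ℤ) + w - 1) r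
            * (iteratedDeriv r φ₁ (actSL γ z) p₁ * iteratedDeriv (w - r) φ₂ (actSL γ z) p₂)
          = ∑ r ∈ Finset.range (w + 1), ∑ j ∈ Finset.range (w + 1), ∑ k ∈ Finset.range (w + 1),
              (-1 : ℂ) ^ r * gchoose ((l₁ : ℤ) + w - 1) (w - r) * gchoose ((l₂ : ℤ) + w - 1) r * (Af l₁ r j * ((γ.1 1 0 : ℝ) : ℂ) ^ (r - j) * Jf γ z ^ (l₁ + r + j) * (∑ q, ((ρ₁ γ p₁ q : ℝ) : ℂ) * iteratedDeriv j φ₁ z q)) * (Af l₂ (w - r) k * ((γ.1 1 0 : ℝ) : ℂ) ^ (w - r - k) * Jf γ z ^ (l₂ + (w - r) + k) * (∑ q, ((ρ₂ γ p₂ q : ℝ) : ℂ) * iteratedDeriv k φ₂ z q)) := by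
            refine Finset.sum_congr rfl fun r hr => ?_
            rw [htr₁ r hr, htr₂ r hr, Finset.sum_mul_sum, Finset.mul_sum]
            refine Finset.sum_congr rfl fun j _ => ?_
            rw [Finset.mul_sum]
            exact Finset.sum_congr rfl fun k _ => by ring
        _ = ∑ j ∈ Finset.range (w + 1), ∑ k ∈ Finset.range (w + 1), ∑ r ∈ Finset.range (w + 1),
              (-1 : ℂ) ^ r * gchoose ((l₁ : ℤ) + w - 1) (w - r) * gchoose ((l₂ : ℤ) + w - 1) r * (Af l₁ r j * ((γ.1 1 0 : ℝ) : ℂ) ^ (r - j) * Jf γ z ^ (l₁ + r + j) * (∑ q, ((ρ₁ γ p₁ q : ℝ) : ℂ) * iteratedDeriv j φ₁ z q)) * (Af l₂ (w - r) k * ((γ.1 1 0 : ℝ) : ℂ) ^ (w - r - k) * Jf γ z ^ (l₂ + (w - r) + k) * (∑ q, ((ρ₂ γ p₂ q : ℝ) : ℂ) * iteratedDeriv k φ₂ z q)) := by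
            rw [Finset.sum_comm]
            exact Finset.sum_congr rfl fun j _ => Finset.sum_comm
        _ = ∑ j ∈ Finset.range (w + 1), ∑ k ∈ Finset.range (w + 1),
              (if j + k = w then (-1 : ℂ) ^ j * gchoose ((l₂ : ℤ) + w - 1) j * gchoose ((l₁ : ℤ) + w - 1) k * Jf γ z ^ (l₁ + l₂ + 2 * w) * (∑ q, ((ρ₁ γ p₁ q : ℝ) : ℂ) * iteratedDeriv j φ₁ z q) * (∑ q, ((ρ₂ γ p₂ q : ℝ) : ℂ) * iteratedDeriv k φ₂ z q) else 0) := by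
            exact Finset.sum_congr rfl fun j _ => Finset.sum_congr rfl fun k _ =>
              inner_sum l₁ l₂ w j k _ _ _ _
        _ = ∑ j ∈ Finset.range (w + 1), ((-1 : ℂ) ^ j * gchoose ((l₂ : ℤ) + w - 1) j * gchoose ((l₁ : ℤ) + w - 1) (w - j) * Jf γ z ^ (l₁ + l₂ + 2 * w) * (∑ q, ((ρ₁ γ p₁ q : ℝ) : ℂ) * iteratedDeriv j φ₁ z q) * (∑ q, ((ρ₂ γ p₂ q : ℝ) : ℂ) * iteratedDeriv (w - j) φ₂ z q)) := by
            refine Finset.sum_congr rfl fun j hj => ?_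
            have hjw : j ≤ w := Nat.lt_succ_iff.1 (Finset.mem_range.1 hj)
            rw [Finset.sum_eq_single (w - j)]
            · rw [if_pos (by omega)]
            · intro k _ hk
              rw [if_neg (by omega)]
            · intro h
              exact absurd (Finset.mem_range.2 (by omega)) h
        _ = Jf γ z ^ (l₁ + l₂ + 2 * w) * ∑ r ∈ Finset.range (w + 1), (-1 : ℂ) ^ r * gchoose ((l₁ : ℤ) + w - 1) (w - r) * gchoose ((l₂ : ℤ) + w - 1) r
            * ((∑ q, ((ρ₁ γ p₁ q : ℝ) : ℂ) * iteratedDeriv r φ₁ z q) * (∑ q, ((ρ₂ γ p₂ q : ℝ) : ℂ) * iteratedDeriv (w - r) φ₂ z q)) := by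
            rw [Finset.mul_sum]
            exact Finset.sum_congr rfl fun r _ => by ring
    have hmv : (((Matrix.kroneckerMap (· * ·) (ρ₁ γ) (ρ₂ γ)).map Complex.ofReal) *ᵥ
          (fun p : Fin n₁ × Fin n₂ => ∑ r ∈ Finset.range (w + 1), (-1 : ℂ) ^ r * gchoose ((l₁ : ℤ) + w - 1) (w - r) * gchoose ((l₂ : ℤ) + w - 1) r
            * (iteratedDeriv r φ₁ z p.1 * iteratedDeriv (w - r) φ₂ z p.2))) (p₁, p₂)
        = ∑ q : Fin n₁ × Fin n₂, (((ρ₁ γ p₁ q.1 : ℝ) : ℂ) * ((ρ₂ γ p₂ q.2 : ℝ) : ℂ))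
            * (∑ r ∈ Finset.range (w + 1), (-1 : ℂ) ^ r * gchoose ((l₁ : ℤ) + w - 1) (w - r) * gchoose ((l₂ : ℤ) + w - 1) r
              * (iteratedDeriv r φ₁ z q.1 * iteratedDeriv (w - r) φ₂ z q.2)) := by
      simp [Matrix.mulVec, dotProduct, Matrix.kroneckerMap_apply, Matrix.map_apply]
    show ∑ r ∈ Finset.range (w + 1), (-1 : ℂ) ^ r * gchoose ((l₁ : ℤ) + w - 1) (w - r) * gchoose ((l₂ : ℤ) + w - 1) r
          * (iteratedDeriv r φ₁ (actSL γ z) p₁ * iteratedDeriv (w - r) φ₂ (actSL γ z) p₂)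
        = Jf γ z ^ ((l₁ : ℤ) + l₂ + 2 * w) • (((Matrix.kroneckerMap (· * ·) (ρ₁ γ) (ρ₂ γ)).map Complex.ofReal) *ᵥ
          (fun p : Fin n₁ × Fin n₂ => ∑ r ∈ Finset.range (w + 1), (-1 : ℂ) ^ r * gchoose ((l₁ : ℤ) + w - 1) (w - r) * gchoose ((l₂ : ℤ) + w - 1) r
            * (iteratedDeriv r φ₁ z p.1 * iteratedDeriv (w - r) φ₂ z p.2))) (p₁, p₂)
    rw [smul_eq_mul, show ((l₁ : ℤ) + l₂ + 2 * w) = ((l₁ + l₂ + 2 * w : ℕ) : ℤ) by push_cast; ring,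
      zpow_natCast, hmv,
      sum_factor w (fun q₁ => ((ρ₁ γ p₁ q₁ : ℝ) : ℂ)) (fun q₂ => ((ρ₂ γ p₂ q₂ : ℝ) : ℂ))
        (fun r q₁ => iteratedDeriv r φ₁ z q₁) (fun r q₂ => iteratedDeriv r φ₂ z q₂)
        (fun r => (-1 : ℂ) ^ r * gchoose ((l₁ : ℤ) + w - 1) (w - r) * gchoose ((l₂ : ℤ) + w - 1) r)]
    exact hstep
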